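/- In the small CM setup, for all r, λ, λ̃ ∈ ℚ(√D₀) one has r·w = ι_{z₁}(r)·w, r·w̃ = ι_{z₁}(r)·w̃, and consequently i_d(r·λ̃, r·λ) = ι_{z₁}(r) · i_d(λ̃, λ) as 2×2 complex matrices. (Lemma 2.5 of the paper.) -/
import Mathlib


open Matrix Complex ComplexConjugate

/-- `√D₀ := i·√|D₀|`. -/
noncomputable def sd (D₀ : ℤ) : ℂ := Complex.I * Real.sqrt (D₀.natAbs)

/-- The matrix `w_d(z₁,z₂) = (1/d)·[[z₁, −z₁z₂],[1, −z₂]]`. -/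
noncomputable def wMat (d : ℕ) (z₁ z₂ : ℂ) : Matrix (Fin 2) (Fin 2) ℂ :=
  ((d : ℂ))⁻¹ • !![z₁, -z₁ * z₂; 1, -z₂]

/-- Entrywise complex conjugation of a matrix. -/
noncomputable def matConj (m : Matrix (Fin 2) (Fin 2) ℂ) : Matrix (Fin 2) (Fin 2) ℂ :=
  m.map (starRingEnd ℂ)

/-- `i_d^+(λ) := −(d/√D₀)·(λ·w̃ − conj(λ·w̃))`. -/
noncomputable def iPlus (D₀ : ℤ) (d : ℕ) (z₁ z₂ : ℂ) (lam : ℂ) : Matrix (Fin 2) (Fin 2) ℂ :=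
  (-(d : ℂ) / sd D₀) •
    (lam • wMat d z₁ (starRingEnd ℂ z₂) - matConj (lam • wMat d z₁ (starRingEnd ℂ z₂)))

/-- `i_d^−(λ) := −(d/√D₀)·(λ·w − conj(λ·w))`. -/
noncomputable def iMinus (D₀ : ℤ) (d : ℕ) (z₁ z₂ : ℂ) (lam : ℂ) : Matrix (Fin 2) (Fin 2) ℂ :=
  (-(d : ℂ) / sd D₀) • (lam • wMat d z₁ z₂ - matConj (lam • wMat d z₁ z₂))

/-- Lemma 2.5 of the paper: for `r ∈ ℚ(√D₀)` one has `r·w = ι_{z₁}(r)·w`,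
`r·w̃ = ι_{z₁}(r)·w̃`, and `i_d(rλ̃, rλ) = ι_{z₁}(r)·i_d(λ̃,λ)`, where `ι_{z₁}(r)` is
the unique real matrix `A` with `A·(z₁,1)ᵗ = r(z₁,1)ᵗ` and `A·(z̄₁,1)ᵗ = r̄(z̄₁,1)ᵗ`. -/
theorem stmt_5 (D₀ : ℤ) (hD₀ : D₀ < 0) (t₁ t₂ a₁ a₂ d : ℕ)
    (ht₁ : 0 < t₁) (ht₂ : 0 < t₂) (ha₁ : 0 < a₁) (ha₂ : 0 < a₂) (hd : 0 < d)
    (b₁ b₂ : ℤ) (z₁ z₂ : ℂ)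
    (hz₁ : z₁ = ((b₁ : ℂ) + (t₁ : ℂ) * sd D₀) / (2 * (a₁ : ℂ)))
    (hz₂ : z₂ = ((b₂ : ℂ) + (t₂ : ℂ) * sd D₀) / (2 * (a₂ : ℂ)))
    (r : ℂ) (x y : ℚ) (hr : r = (x : ℂ) + (y : ℂ) * sd D₀)
    (A : Matrix (Fin 2) (Fin 2) ℝ)
    (hA1 : (A.map Complex.ofReal).mulVec ![z₁, 1] = r • ![z₁, 1])
    (hA2 : (A.map Complex.ofReal).mulVec ![conj z₁, 1] = conj r • ![conj z₁, 1]) :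
    (r • wMat d z₁ z₂ = A.map Complex.ofReal * wMat d z₁ z₂) ∧
    (r • wMat d z₁ (conj z₂) = A.map Complex.ofReal * wMat d z₁ (conj z₂)) ∧
    (∀ u v u' v' : ℚ,
      iPlus D₀ d z₁ z₂ (r * ((u : ℂ) + (v : ℂ) * sd D₀)) +
        iMinus D₀ d z₁ z₂ (r * ((u' : ℂ) + (v' : ℂ) * sd D₀)) =
      A.map Complex.ofReal *
        (iPlus D₀ d z₁ z₂ ((u : ℂ) + (v : ℂ) * sd D₀) +
          iMinus D₀ d z₁ z₂ ((u' : ℂ) + (v' : ℂ) * sd D₀))) := by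
  set M := A.map Complex.ofReal with hM
  have e0 : M 0 0 * z₁ + M 0 1 * 1 = r * z₁ := by
    have := congrFun hA1 0
    simpa [Matrix.mulVec, dotProduct, Fin.sum_univ_two] using this
  have e1 : M 1 0 * z₁ + M 1 1 * 1 = r * 1 := by
    have := congrFun hA1 1
    simpa [Matrix.mulVec, dotProduct, Fin.sum_univ_two] using this
  have f0 : M 0 0 * conj z₁ + M 0 1 * 1 = conj r * conj z₁ := by
    have := congrFun hA2 0
    simpa [Matrix.mulVec, dotProduct, Fin.sum_univ_two] using this
  have f1 : M 1 0 * conj z₁ + M 1 1 * 1 = conj r * 1 := by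
    have := congrFun hA2 1
    simpa [Matrix.mulVec, dotProduct, Fin.sum_univ_two] using this
  have key : ∀ s : ℂ, M * wMat d z₁ s = r • wMat d z₁ s := by
    intro s
    ext i j
    fin_cases i <;> fin_cases j <;>
      simp [wMat, Matrix.mul_apply, Fin.sum_univ_two, Fin.isValue]
    · linear_combination (((d:ℂ))⁻¹) * e0
    · linear_combination (-((d:ℂ))⁻¹ * s) * e0
    · linear_combination (((d:ℂ))⁻¹) * e1
    · linear_combination (-((d:ℂ))⁻¹ * s) * e1
  have keyc : ∀ s : ℂ, M * matConj (wMat d z₁ s) = conj r • matConj (wMat d z₁ s) := by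
    intro s
    ext i j
    fin_cases i <;> fin_cases j <;>
      simp [wMat, matConj, Matrix.mul_apply, Fin.sum_univ_two, Matrix.map_apply,
        _root_.map_mul, map_inv₀]
    · linear_combination (((d:ℂ))⁻¹) * f0
    · linear_combination (-((d:ℂ))⁻¹ * conj s) * f0
    · linear_combination (((d:ℂ))⁻¹) * f1
    · linear_combination (-((d:ℂ))⁻¹ * conj s) * f1
  have hcs : ∀ (μ : ℂ) (N : Matrix (Fin 2) (Fin 2) ℂ),
      matConj (μ • N) = conj μ • matConj N := by
    intro μ N; ext i j; simp [matConj]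
  have hiP : ∀ lam : ℂ, iPlus D₀ d z₁ z₂ (r * lam) = M * iPlus D₀ d z₁ z₂ lam := by
    intro lam
    unfold iPlus
    rw [hcs, hcs, Matrix.mul_smul, Matrix.mul_sub, Matrix.mul_smul, Matrix.mul_smul, key, keyc,
      _root_.map_mul]
    module
  have hiM : ∀ lam : ℂ, iMinus D₀ d z₁ z₂ (r * lam) = M * iMinus D₀ d z₁ z₂ lam := by
    intro lam
    unfold iMinus
    rw [hcs, hcs, Matrix.mul_smul, Matrix.mul_sub, Matrix.mul_smul, Matrix.mul_smul, key, keyc,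
      _root_.map_mul]
    module
  refine ⟨(key z₂).symm, (key (conj z₂)).symm, ?_⟩
  intro u v u' v'
  rw [hiP, hiM, Matrix.mul_add]
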